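/- Lemma (optimal dual multiplier in the type-q CVaR reformulation). For θ > 0, ε > 0, s > 0 and q ∈ (1,∞), one has inf_{λ > 0} ( λ·θ^q + ε·P_q(s,λ) ) = ε^{(q−1)/q}·θ·s, and the infimum is attained at λ* = ε^{(q−1)/q}·s·q^{−1}·θ^{1−q}. -/

import Mathlib

private lemma eq_of_log_eq {x y : ℝ} (hx : 0 < x) (hy : 0 < y)
    (h : Real.log x = Real.log y) : x = y := by
  rw [← Real.exp_log hx, ← Real.exp_log hy, h]

private lemma lower_bound (θ ε s q lam : ℝ) (hθ : 0 < θ) (hε : 0 < ε) (hs : 0 < s)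
    (hq : 1 < q) (hlam : 0 < lam) :
    ε ^ ((q - 1) / q) * θ * s ≤
      lam * θ ^ q +
        ε * ((q - 1) * q ^ (-(q / (q - 1))) * lam ^ (-(1 / (q - 1))) * s ^ (q / (q - 1))) := by
  have hq0 : (0:ℝ) < q := zero_lt_one.trans hq
  have hq1 : (0:ℝ) < q - 1 := sub_pos.2 hq
  have hp' : (0:ℝ) < q / (q - 1) := div_pos hq0 hq1
  have hpq : q.HolderConjugate (q / (q - 1)) := (Real.holderConjugate_iff_eq_conjExponent hq).2 rfl
  have hqlam : (0:ℝ) < q * lam := mul_pos hq0 hlam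
  have ha : 0 < (q * lam) ^ (1/q) * θ := by positivity
  have hb : 0 < ε ^ ((q - 1) / q) * (q * lam) ^ (-(1/q)) * s := by positivity
  have hyoung := Real.young_inequality_of_nonneg ha.le hb.le hpq
  have hab : (q * lam) ^ (1/q) * θ * (ε ^ ((q - 1) / q) * (q * lam) ^ (-(1/q)) * s)
      = ε ^ ((q - 1) / q) * θ * s := by
    apply eq_of_log_eq (by positivity) (by positivity)
    simp (disch := positivity) only [Real.log_mul, Real.log_rpow]
    ring
  have h1 : ((q * lam) ^ (1/q) * θ) ^ q / q = lam * θ ^ q := by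
    rw [div_eq_iff hq0.ne']
    apply eq_of_log_eq (by positivity) (by positivity)
    simp (disch := positivity) only [Real.log_mul, Real.log_rpow]
    field_simp
    ring
  have h2 : (ε ^ ((q - 1) / q) * (q * lam) ^ (-(1/q)) * s) ^ (q / (q-1)) / (q / (q - 1)) =
      ε * ((q - 1) * q ^ (-(q / (q - 1))) * lam ^ (-(1 / (q - 1))) * s ^ (q / (q - 1))) := by
    rw [div_eq_iff hp'.ne']
    apply eq_of_log_eq (by positivity) (by positivity)
    simp (disch := positivity) only [Real.log_mul, Real.log_rpow, Real.log_div]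
    field_simp
    ring
  rw [hab, h1, h2] at hyoung
  exact hyoung

private lemma attain_eq (θ ε s q : ℝ) (hθ : 0 < θ) (hε : 0 < ε) (hs : 0 < s) (hq : 1 < q) :
    (ε ^ ((q - 1) / q) * s * q⁻¹ * θ ^ (1 - q)) * θ ^ q +
      ε * ((q - 1) * q ^ (-(q / (q - 1))) *
        (ε ^ ((q - 1) / q) * s * q⁻¹ * θ ^ (1 - q)) ^ (-(1 / (q - 1))) * s ^ (q / (q - 1)))
      = ε ^ ((q - 1) / q) * θ * s := by
  have hq0 : (0:ℝ) < q := zero_lt_one.trans hq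
  have hq1 : (0:ℝ) < q - 1 := sub_pos.2 hq
  have h1 : (ε ^ ((q - 1) / q) * s * q⁻¹ * θ ^ (1 - q)) * θ ^ q
      = (ε ^ ((q - 1) / q) * θ * s) * q⁻¹ := by
    apply eq_of_log_eq (by positivity) (by positivity)
    simp (disch := positivity) only [Real.log_mul, Real.log_rpow, Real.log_inv]
    ring
  have h2 : ε * ((q - 1) * q ^ (-(q / (q - 1))) *
        (ε ^ ((q - 1) / q) * s * q⁻¹ * θ ^ (1 - q)) ^ (-(1 / (q - 1))) * s ^ (q / (q - 1)))
      = (ε ^ ((q - 1) / q) * θ * s) * ((q - 1) * q⁻¹) := by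
    apply eq_of_log_eq (by positivity) (by positivity)
    simp (disch := positivity) only [Real.log_mul, Real.log_rpow, Real.log_inv]
    field_simp
    ring
  rw [h1, h2]
  field_simp
  ring

/-- **Optimal dual multiplier in the type-`q` CVaR reformulation.**
For `θ > 0`, `ε > 0`, `s > 0`, `q ∈ (1,∞)` and
`Pq lam = (q-1) q^{-q/(q-1)} lam^{-1/(q-1)} s^{q/(q-1)}`:
`inf_{lam > 0} (lam θ^q + ε Pq(lam)) = ε^{(q-1)/q} θ s`, attained at
`lam* = ε^{(q-1)/q} s q⁻¹ θ^{1-q}`. -/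
theorem optimal_dual_multiplier_q_cvar
    (θ ε s q : ℝ) (hθ : 0 < θ) (hε : 0 < ε) (hs : 0 < s) (hq : 1 < q)
    (Pq : ℝ → ℝ)
    (hPq : ∀ lam : ℝ, Pq lam =
      (q - 1) * q ^ (-(q / (q - 1))) * lam ^ (-(1 / (q - 1))) * s ^ (q / (q - 1))) :
    sInf {v : ℝ | ∃ lam : ℝ, 0 < lam ∧ v = lam * θ ^ q + ε * Pq lam}
        = ε ^ ((q - 1) / q) * θ * s ∧
    0 < ε ^ ((q - 1) / q) * s * q⁻¹ * θ ^ (1 - q) ∧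
    (ε ^ ((q - 1) / q) * s * q⁻¹ * θ ^ (1 - q)) * θ ^ q +
        ε * Pq (ε ^ ((q - 1) / q) * s * q⁻¹ * θ ^ (1 - q))
      = ε ^ ((q - 1) / q) * θ * s := by
  have hq0 : (0:ℝ) < q := zero_lt_one.trans hq
  have hlamstar : 0 < ε ^ ((q - 1) / q) * s * q⁻¹ * θ ^ (1 - q) := by positivity
  have hatt : (ε ^ ((q - 1) / q) * s * q⁻¹ * θ ^ (1 - q)) * θ ^ q +
      ε * Pq (ε ^ ((q - 1) / q) * s * q⁻¹ * θ ^ (1 - q)) = ε ^ ((q - 1) / q) * θ * s := by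
    rw [hPq]; exact attain_eq θ ε s q hθ hε hs hq
  have hlb : ∀ v ∈ {v : ℝ | ∃ lam : ℝ, 0 < lam ∧ v = lam * θ ^ q + ε * Pq lam},
      ε ^ ((q - 1) / q) * θ * s ≤ v := by
    rintro v ⟨lam, hlam, rfl⟩
    rw [hPq]
    exact lower_bound θ ε s q lam hθ hε hs hq hlam
  have hmem : ε ^ ((q - 1) / q) * θ * s ∈
      {v : ℝ | ∃ lam : ℝ, 0 < lam ∧ v = lam * θ ^ q + ε * Pq lam} :=
    ⟨_, hlamstar, hatt.symm⟩
  refine ⟨le_antisymm (csInf_le ⟨_, hlb⟩ hmem) (le_csInf ⟨_, hmem⟩ hlb), hlamstar, hatt⟩
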